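/- Let γ > 0 and let f ∈ C¹(ℝ) satisfy f(0) > 0 and lim_{x→±∞} |x|^γ f(x) = C for some finite C > 0, and let χ̃ ∈ C¹(U*) be bounded. Then the function χ(t,v) = v^{−γ} f(t/v) + χ̃(t,v) (for v > 0) satisfies conditions (1) and (2) of the class Ψ₂^γ: there exist constants A, K, ε, ν, C', η, B > 0 such that χ(t,v) ≥ C'·C·|t|^{−γ}/2 whenever |t| > ν v (for small t, v), and |χ(t,v)| < B·v^{−γ} whenever |t| < η v. -/

import Mathlib

open Real Filter Set

/-- **Scaling-form criterion for the second-order class `Ψ₂^γ`.**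
Let `γ > 0`, let `f ∈ C¹(ℝ)` with `f(0) > 0` and `|x|^γ f(x) → C` as `x → ±∞` for
some finite `C > 0`, and let `χ̃` be a bounded `C¹` function on `U*`.  Then
`χ(t,v) = v^(−γ) f(t/v) + χ̃(t,v)` (for `v > 0`) satisfies conditions (1) and (2)
of the class `Ψ₂^γ`: there exist constants `ν, C', η, B > 0` (and a smallness
scale `δ > 0`) such that `χ(t,v) ≥ C'·C·|t|^(−γ)/2` whenever `|t| > ν·v` (for small
`t, v`), and `|χ(t,v)| < B·v^(−γ)` whenever `|t| < η·v`. -/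
theorem scaling_form_in_second_order_class
    (U : Set (ℝ × ℝ)) (hUsub : U ⊆ {p : ℝ × ℝ | 0 ≤ p.2})
    (hUopen : ∃ V : Set (ℝ × ℝ), IsOpen V ∧ U = V ∩ {p : ℝ × ℝ | 0 ≤ p.2})
    (hU0 : (0, 0) ∈ U)
    (Ustar : Set (ℝ × ℝ)) (hUstar : Ustar = U \ {(0, 0)})
    (γ : ℝ) (hγ : 0 < γ)
    (f : ℝ → ℝ) (hf : ContDiff ℝ 1 f) (hf0 : 0 < f 0)
    (C : ℝ) (hC : 0 < C)
    (hftop : Tendsto (fun x : ℝ => |x| ^ γ * f x) atTop (nhds C))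
    (hfbot : Tendsto (fun x : ℝ => |x| ^ γ * f x) atBot (nhds C))
    (χtil : ℝ × ℝ → ℝ) (Mb : ℝ)
    (hχtil : ∀ p ∈ Ustar, |χtil p| ≤ Mb)
    (hχtilC1 : ContDiffOn ℝ 1 χtil Ustar)
    (χ : ℝ → ℝ → ℝ)
    (hχ : ∀ t v : ℝ, 0 < v → χ t v = v ^ (-γ) * f (t / v) + χtil (t, v)) :
    ∃ ν > 0, ∃ C' > 0, ∃ η > 0, ∃ B > 0, ∃ δ > 0,
      (∀ t v : ℝ, 0 < v → v < δ → |t| < δ → ν * v < |t| →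
        C' * C * |t| ^ (-γ) / 2 ≤ χ t v) ∧
      (∀ t v : ℝ, 0 < v → v < δ → |t| < η * v → |χ t v| < B * v ^ (-γ)) := by

  obtain ⟨V, hVopen, hUV⟩ := hUopen
  have hV0 : ((0:ℝ), (0:ℝ)) ∈ V := by
    have := hU0; rw [hUV] at this; exact this.1
  obtain ⟨r, hr, hball⟩ := Metric.isOpen_iff.1 hVopen _ hV0
  -- membership lemma
  have hmem : ∀ t v : ℝ, 0 < v → v < r → |t| < r → (t, v) ∈ Ustar := by
    intro t v hv hvr htr
    rw [hUstar, hUV]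
    refine ⟨⟨hball ?_, le_of_lt hv⟩, ?_⟩
    · rw [Metric.mem_ball, Prod.dist_eq]
      simp only [Real.dist_eq, sub_zero]
      rw [abs_of_pos hv]
      exact max_lt htr hvr
    · simp only [mem_singleton_iff, Prod.mk.injEq, not_and]
      intro _; exact hv.ne'
  have hMb : 0 ≤ Mb := by
    have h := hχtil _ (hmem 0 (r/2) (by linarith) (by linarith) (by simpa using hr))
    exact le_trans (abs_nonneg _) h
  -- tail bounds for f
  have h1 : ∀ᶠ x in atTop, C/2 < |x|^γ * f x := hftop.eventually (eventually_gt_nhds (by linarith))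
  have h2 : ∀ᶠ x in atBot, C/2 < |x|^γ * f x := hfbot.eventually (eventually_gt_nhds (by linarith))
  rw [eventually_atTop] at h1
  rw [eventually_atBot] at h2
  obtain ⟨X, hX⟩ := h1
  obtain ⟨X', hX'⟩ := h2
  -- bound of f on [-1,1]
  obtain ⟨Mf, hMf⟩ := (isCompact_Icc (a := (-1:ℝ)) (b := 1)).exists_bound_of_continuousOn
    hf.continuous.continuousOn
  have hMf0 : 0 ≤ Mf := le_trans (norm_nonneg _) (hMf 0 ⟨by norm_num, by norm_num⟩)
  set ν : ℝ := max X (max (-X') 1) with hν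
  have hν1 : (1:ℝ) ≤ ν := le_max_of_le_right (le_max_right _ _)
  have hνpos : 0 < ν := lt_of_lt_of_le one_pos hν1
  set δ0 : ℝ := (C/(4*(Mb+1))) ^ (1/γ) with hδ0
  have hbase : 0 < C/(4*(Mb+1)) := by positivity
  have hδ0pos : 0 < δ0 := Real.rpow_pos_of_pos hbase _
  set δ : ℝ := min (min 1 (r/2)) δ0 with hδ
  have hδpos : 0 < δ := lt_min (lt_min one_pos (by linarith)) hδ0pos
  have hδ1 : δ ≤ 1 := le_trans (min_le_left _ _) (min_le_left _ _)
  have hδr : δ ≤ r/2 := le_trans (min_le_left _ _) (min_le_right _ _)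
  have hδγ : δ ^ γ ≤ C/(4*(Mb+1)) := by
    calc δ ^ γ ≤ ((C/(4*(Mb+1))) ^ (1/γ)) ^ γ := by
          exact Real.rpow_le_rpow hδpos.le (min_le_right _ _) hγ.le
      _ = C/(4*(Mb+1)) := by
          rw [← Real.rpow_mul hbase.le, one_div, inv_mul_cancel₀ hγ.ne', Real.rpow_one]
  refine ⟨ν, hνpos, 1/2, by norm_num, 1, one_pos, Mf + Mb + 1, by linarith, δ, hδpos, ?_, ?_⟩
  · -- condition (1)
    intro t v hv hvδ htδ hνv
    rw [hχ t v hv]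
    have ht0 : 0 < |t| := lt_trans (by positivity) hνv
    have htne : t ≠ 0 := abs_pos.mp ht0
    have htv : ν < |t| / v := (lt_div_iff₀ hv).mpr (by linarith [hνv])
    have habs : |t / v| = |t| / v := by rw [abs_div, abs_of_pos hv]
    have hratio : C/2 ≤ |t / v| ^ γ * f (t / v) := by
      rcases htne.lt_or_gt with hneg | hpos
      · have hXν : -X' ≤ ν := le_max_of_le_right (le_max_left _ _)
        have heq : t / v = -(|t| / v) := by
          rw [← habs, abs_of_neg (div_neg_of_neg_of_pos hneg hv)]; ring
        have hle : t / v ≤ X' := by rw [heq]; linarith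
        exact (hX' _ hle).le
      · have heq : |t| / v = t / v := by
          rw [← habs, abs_of_pos (div_pos hpos hv)]
        have hXν : X ≤ ν := le_max_left _ _
        have hle : X ≤ t / v := by linarith
        exact (hX _ hle).le
    rw [habs] at hratio
    have hrw : |t| ^ (-γ) * ((|t|/v) ^ γ) = v ^ (-γ) := by
      rw [Real.div_rpow (abs_nonneg t) hv.le, Real.rpow_neg (abs_nonneg t),
        Real.rpow_neg hv.le]
      field_simp
    have hkey : C/2 * |t| ^ (-γ) ≤ v ^ (-γ) * f (t / v) := by
      have hpos' : (0:ℝ) ≤ |t| ^ (-γ) := (Real.rpow_pos_of_pos ht0 _).le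
      have h := mul_le_mul_of_nonneg_left hratio hpos'
      calc C/2 * |t| ^ (-γ) = |t| ^ (-γ) * (C/2) := by ring
        _ ≤ |t| ^ (-γ) * ((|t|/v) ^ γ * f (t / v)) := h
        _ = (|t| ^ (-γ) * (|t|/v) ^ γ) * f (t / v) := by ring
        _ = v ^ (-γ) * f (t / v) := by rw [hrw]
    have hMb4 : Mb + 1 ≤ C/4 * |t| ^ (-γ) := by
      have htγ : |t| ^ γ ≤ C/(4*(Mb+1)) :=
        le_trans (Real.rpow_le_rpow (abs_nonneg t) htδ.le hγ.le) hδγ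
      have htγpos : 0 < |t| ^ γ := Real.rpow_pos_of_pos ht0 _
      have hMb1 : Mb + 1 ≠ 0 := by positivity
      have h' : |t| ^ γ * (Mb+1) ≤ C/4 := by
        calc |t| ^ γ * (Mb+1) ≤ (C/(4*(Mb+1))) * (Mb+1) :=
              mul_le_mul_of_nonneg_right htγ (by linarith)
          _ = C/4 := by field_simp
      rw [Real.rpow_neg (abs_nonneg t), ← div_eq_mul_inv, le_div_iff₀ htγpos]
      linarith [h', mul_comm (|t| ^ γ) (Mb+1)]
    have hχb : -Mb ≤ χtil (t, v) := by
      have h := hχtil _ (hmem t v hv (by linarith) (by linarith))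
      have := abs_le.mp h
      linarith [this.1]
    linarith
  · -- condition (2)
    intro t v hv hvδ htv
    rw [one_mul] at htv
    rw [hχ t v hv]
    have hvγpos : 0 < v ^ (-γ) := Real.rpow_pos_of_pos hv _
    have hfb : |f (t/v)| ≤ Mf := by
      have : |t/v| ≤ 1 := by
        rw [abs_div, abs_of_pos hv, div_le_one hv]
        linarith [le_of_lt htv]
      have hm : t/v ∈ Icc (-1:ℝ) 1 := abs_le.mp this
      simpa using hMf _ hm
    have hχb : |χtil (t, v)| ≤ Mb :=
      hχtil _ (hmem t v hv (by linarith) (by linarith [abs_nonneg t]))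
    have hv1 : 1 ≤ v ^ (-γ) := by
      rw [Real.rpow_neg hv.le]
      rw [one_le_inv_iff₀]
      exact ⟨Real.rpow_pos_of_pos hv _, Real.rpow_le_one hv.le (by linarith) hγ.le⟩
    calc |v ^ (-γ) * f (t/v) + χtil (t, v)| ≤ |v ^ (-γ) * f (t/v)| + |χtil (t, v)| := abs_add_le _ _
      _ = v ^ (-γ) * |f (t/v)| + |χtil (t, v)| := by rw [abs_mul, abs_of_pos hvγpos]
      _ ≤ v ^ (-γ) * Mf + Mb := by
          have := mul_le_mul_of_nonneg_left hfb hvγpos.le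
          linarith
      _ < (Mf + Mb + 1) * v ^ (-γ) := by nlinarith
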